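/- (Stability of biadditive equations) Let T > 0 and let g : [−T,T) × [−T,T) → ℂ be θ-biadditive, i.e., |g(x₁+x₂, y) − g(x₁,y) − g(x₂,y)| ≤ θ and |g(x, y₁+y₂) − g(x,y₁) − g(x,y₂)| ≤ θ whenever all arguments and sums lie in [−T,T). Then there exists a biadditive function G on [−T,T) × [−T,T) with |g(x,y) − G(x,y)| ≤ 6θ for all x, y ∈ [−T,T). Moreover, if g is symmetric then G can be chosen symmetric. -/

import Mathlib

open Filter Topology

open Filter Topology

namespace BST

noncomputable def nn (T x : ℝ) : ℤ := ⌈x / T⌉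
noncomputable def rr (T x : ℝ) : ℝ := x - nn T x * T
noncomputable def ext (T : ℝ) (f : ℝ → ℂ) (x : ℝ) : ℂ :=
  f (rr T x) - (nn T x : ℂ) * f (-T)
noncomputable def sq (T : ℝ) (f : ℝ → ℂ) (x : ℝ) (k : ℕ) : ℂ :=
  ((1:ℂ)/2) ^ k * ext T f (2 ^ k * x)
noncomputable def M (T : ℝ) (f : ℝ → ℂ) (x : ℝ) : ℂ := limUnder atTop (sq T f x)

variable {T δ : ℝ} {f : ℝ → ℂ}

lemma rr_mem (hT : 0 < T) (x : ℝ) : rr T x ∈ Set.Ioc (-T) 0 := by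
  have h1 : x / T ≤ (⌈x / T⌉ : ℝ) := Int.le_ceil _
  have h2 : (⌈x / T⌉ : ℝ) < x / T + 1 := Int.ceil_lt_add_one _
  have h3 : x ≤ (⌈x / T⌉ : ℝ) * T := by
    rw [← div_le_iff₀ hT]; linarith
  have h4 : ((⌈x / T⌉ : ℝ) - 1) * T < x := by
    rw [← lt_div_iff₀ hT]; linarith
  constructor
  · simp only [rr, nn]; nlinarith
  · simp only [rr, nn]; linarith

lemma nn_eq (hT : 0 < T) (m : ℤ) {s : ℝ} (hs : s ∈ Set.Ioc (-T) 0) :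
    nn T (m * T + s) = m := by
  have hT' : T ≠ 0 := ne_of_gt hT
  have h : (m * T + s) / T = s / T + m := by field_simp; ring
  have hs1 : -1 < s / T := by
    rw [lt_div_iff₀ hT]; linarith [hs.1]
  have hs2 : s / T ≤ 0 := div_nonpos_of_nonpos_of_nonneg hs.2 hT.le
  have : ⌈s / T⌉ = 0 := Int.ceil_eq_zero_iff.mpr ⟨hs1, hs2⟩
  simp [nn, h, Int.ceil_add_intCast, this]

lemma rr_eq (hT : 0 < T) (m : ℤ) {s : ℝ} (hs : s ∈ Set.Ioc (-T) 0) :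
    rr T (m * T + s) = s := by
  simp [rr, nn_eq hT m hs]

def Add1 (T δ : ℝ) (f : ℝ → ℂ) : Prop :=
  ∀ x y : ℝ, x ∈ Set.Ico (-T) T → y ∈ Set.Ico (-T) T → x + y ∈ Set.Ico (-T) T →
    ‖(f (x + y) - f x - f y)‖ ≤ δ

lemma Ioc_subset_Ico (hT : 0 < T) {s : ℝ} (hs : s ∈ Set.Ioc (-T) 0) :
    s ∈ Set.Ico (-T) T := ⟨hs.1.le, lt_of_le_of_lt hs.2 hT⟩

lemma negT_mem (hT : 0 < T) : -T ∈ Set.Ico (-T) T := ⟨le_refl _, by linarith⟩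

lemma abs_sub_le' (A B : ℂ) : ‖(A - B)‖ ≤ ‖A‖ + ‖B‖ := by
  simpa [sub_eq_add_neg] using norm_add_le A (-B)

lemma ext_defect (hT : 0 < T) (hδ : 0 ≤ δ) (hf : Add1 T δ f) (u v : ℝ) :
    ‖(ext T f (u + v) - ext T f u - ext T f v)‖ ≤ 2 * δ := by
  have hr : rr T u ∈ Set.Ioc (-T) 0 := rr_mem hT u
  have hs : rr T v ∈ Set.Ioc (-T) 0 := rr_mem hT v
  have hu : u = nn T u * T + rr T u := by simp [rr]
  have hv : v = nn T v * T + rr T v := by simp [rr]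
  by_cases hcase : -T < rr T u + rr T v
  · have hmem : rr T u + rr T v ∈ Set.Ioc (-T) 0 := ⟨hcase, by linarith [hr.2, hs.2]⟩
    have hdec : u + v = ((nn T u + nn T v : ℤ) : ℝ) * T + (rr T u + rr T v) := by
      push_cast; linarith [hu, hv]
    have h1 : nn T (u + v) = nn T u + nn T v := by rw [hdec, nn_eq hT _ hmem]
    have h2 : rr T (u + v) = rr T u + rr T v := by rw [hdec, rr_eq hT _ hmem]
    have key : ext T f (u + v) - ext T f u - ext T f v =
        f (rr T u + rr T v) - f (rr T u) - f (rr T v) := by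
      simp only [ext, h1, h2]; push_cast; ring
    rw [key]
    have := hf (rr T u) (rr T v) (Ioc_subset_Ico hT hr) (Ioc_subset_Ico hT hs)
      (Ioc_subset_Ico hT hmem)
    linarith
  · push_neg at hcase
    have hmem : rr T u + rr T v + T ∈ Set.Ioc (-T) 0 :=
      ⟨by linarith [hr.1, hs.1], by linarith⟩
    have hdec : u + v = ((nn T u + nn T v - 1 : ℤ) : ℝ) * T + (rr T u + rr T v + T) := by
      push_cast; linarith [hu, hv]
    have h1 : nn T (u + v) = nn T u + nn T v - 1 := by rw [hdec, nn_eq hT _ hmem]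
    have h2 : rr T (u + v) = rr T u + rr T v + T := by rw [hdec, rr_eq hT _ hmem]
    have hslt : rr T v < 0 := by
      rcases lt_or_eq_of_le hs.2 with h | h
      · exact h
      · exfalso; rw [h] at hcase; linarith [hr.1]
    have hsT : rr T v + T ∈ Set.Ico (-T) T := ⟨by linarith [hs.1], by linarith⟩
    have key : ext T f (u + v) - ext T f u - ext T f v =
        (f (rr T u + (rr T v + T)) - f (rr T u) - f (rr T v + T)) -
          (f ((rr T v + T) + -T) - f (rr T v + T) - f (-T)) := by
      simp only [ext, h1, h2]
      rw [show rr T u + (rr T v + T) = rr T u + rr T v + T by ring,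
        show (rr T v + T) + -T = rr T v by ring]
      push_cast; ring
    rw [key]
    have hA := hf (rr T u) (rr T v + T) (Ioc_subset_Ico hT hr) hsT
      (by rw [show rr T u + (rr T v + T) = rr T u + rr T v + T by ring]
          exact Ioc_subset_Ico hT hmem)
    have hB := hf (rr T v + T) (-T) hsT (negT_mem hT)
      (by rw [show (rr T v + T) + -T = rr T v by ring]; exact Ioc_subset_Ico hT hs)
    calc ‖_‖ ≤ _ + _ := abs_sub_le' _ _
    _ ≤ 2 * δ := by linarith

lemma ext_approx (hT : 0 < T) (hδ : 0 ≤ δ) (hf : Add1 T δ f) {x : ℝ}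
    (hx : x ∈ Set.Ico (-T) T) : ‖(f x - ext T f x)‖ ≤ δ := by
  by_cases hneg : x ≤ 0
  · rcases eq_or_lt_of_le hx.1 with heq | hlt
    · -- x = -T
      have h1 : nn T (-T) = -1 := by
        rw [show -T = ((-1 : ℤ) : ℝ) * T + (0:ℝ) by push_cast; ring]
        exact nn_eq hT _ ⟨by linarith, le_refl _⟩
      have h2 : rr T (-T) = 0 := by
        nth_rewrite 1 [show -T = ((-1 : ℤ) : ℝ) * T + (0:ℝ) by push_cast; ring]
        exact rr_eq hT _ ⟨by linarith, le_refl _⟩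
      have key : f x - ext T f x = f (0 + 0) - f 0 - f 0 := by
        rw [← heq]
        simp only [ext, h1, h2, zero_add]
        push_cast; ring
      rw [key]
      exact hf 0 0 ⟨by linarith, hT⟩ ⟨by linarith, hT⟩ ⟨by linarith, by linarith⟩
    · -- -T < x ≤ 0
      have h1 : nn T x = 0 := by
        rw [show x = ((0 : ℤ) : ℝ) * T + x by push_cast; ring]
        exact nn_eq hT _ ⟨hlt, hneg⟩
      have h2 : rr T x = x := by
        nth_rewrite 1 [show x = ((0 : ℤ) : ℝ) * T + x by push_cast; ring]
        exact rr_eq hT _ ⟨hlt, hneg⟩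
      have key : f x - ext T f x = 0 := by
        simp only [ext, h1, h2]; push_cast; ring
      rw [key]
      simpa using hδ
  · -- 0 < x < T
    push_neg at hneg
    have hmem : x - T ∈ Set.Ioc (-T) 0 := ⟨by linarith, by linarith [hx.2]⟩
    have h1 : nn T x = 1 := by
      rw [show x = ((1 : ℤ) : ℝ) * T + (x - T) by push_cast; ring]
      exact nn_eq hT _ hmem
    have h2 : rr T x = x - T := by
      nth_rewrite 1 [show x = ((1 : ℤ) : ℝ) * T + (x - T) by push_cast; ring]
      exact rr_eq hT _ hmem
    have key : f x - ext T f x = -(f (x + -T) - f x - f (-T)) := by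
      simp only [ext, h1, h2]
      rw [show x + -T = x - T by ring]
      push_cast; ring
    rw [key, norm_neg]
    exact hf x (-T) hx (negT_mem hT)
      (by rw [show x + -T = x - T by ring]; exact Ioc_subset_Ico hT hmem)
lemma sq_dist (hT : 0 < T) (hδ : 0 ≤ δ) (hf : Add1 T δ f) (x : ℝ) (k : ℕ) :
    dist (sq T f x k) (sq T f x (k + 1)) ≤ δ * (1/2) ^ k := by
  have hd := ext_defect hT hδ hf (2 ^ k * x) (2 ^ k * x)
  rw [show (2:ℝ) ^ k * x + 2 ^ k * x = 2 ^ (k+1) * x by ring] at hd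
  have key : sq T f x k - sq T f x (k + 1) =
      -(((1:ℂ)/2) ^ (k+1) * (ext T f (2 ^ (k+1) * x) - ext T f (2 ^ k * x) - ext T f (2 ^ k * x))) := by
    simp only [sq]
    ring
  rw [Complex.dist_eq, key, norm_neg, norm_mul]
  have habs : ‖(((1:ℂ)/2) ^ (k+1))‖ = (1/2 : ℝ) ^ (k+1) := by
    rw [norm_pow]
    norm_num
  rw [habs]
  calc ((1:ℝ)/2) ^ (k+1) * ‖_‖ ≤ (1/2) ^ (k+1) * (2 * δ) :=
        mul_le_mul_of_nonneg_left hd (by positivity)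
  _ = δ * (1/2) ^ k := by ring

lemma tendsto_M (hT : 0 < T) (hδ : 0 ≤ δ) (hf : Add1 T δ f) (x : ℝ) :
    Filter.Tendsto (sq T f x) Filter.atTop (nhds (M T f x)) := by
  have hc : CauchySeq (sq T f x) :=
    cauchySeq_of_le_geometric (1/2) δ (by norm_num) (sq_dist hT hδ hf x)
  obtain ⟨L, hL⟩ := cauchySeq_tendsto_of_complete hc
  rwa [M, hL.limUnder_eq]

lemma M_approx (hT : 0 < T) (hδ : 0 ≤ δ) (hf : Add1 T δ f) {x : ℝ}
    (hx : x ∈ Set.Ico (-T) T) : ‖(f x - M T f x)‖ ≤ 3 * δ := by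
  have h0 : dist (sq T f x 0) (M T f x) ≤ δ / (1 - 1/2) :=
    dist_le_of_le_geometric_of_tendsto₀ (1/2) δ (by norm_num) (sq_dist hT hδ hf x)
      (tendsto_M hT hδ hf x)
  have hsq0 : sq T f x 0 = ext T f x := by simp [sq]
  rw [hsq0] at h0
  have h1 := ext_approx hT hδ hf hx
  calc ‖(f x - M T f x)‖ = dist (f x) (M T f x) := (Complex.dist_eq _ _).symm
  _ ≤ dist (f x) (ext T f x) + dist (ext T f x) (M T f x) := dist_triangle _ _ _
  _ ≤ δ + δ / (1 - 1/2) := add_le_add (by rw [Complex.dist_eq]; exact h1) h0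
  _ = 3 * δ := by norm_num; ring

lemma M_additive (hT : 0 < T) (hδ : 0 ≤ δ) (hf : Add1 T δ f) (u v : ℝ) :
    M T f (u + v) = M T f u + M T f v := by
  have h1 : Filter.Tendsto (fun k => sq T f (u + v) k - sq T f u k - sq T f v k)
      Filter.atTop (nhds (M T f (u + v) - M T f u - M T f v)) :=
    ((tendsto_M hT hδ hf (u + v)).sub (tendsto_M hT hδ hf u)).sub (tendsto_M hT hδ hf v)
  have h2 : Filter.Tendsto (fun k => sq T f (u + v) k - sq T f u k - sq T f v k)
      Filter.atTop (nhds 0) := by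
    refine squeeze_zero_norm (a := fun k => (2 * δ) * (1/2) ^ k) (fun k => ?_) ?_
    · 
      have key : sq T f (u + v) k - sq T f u k - sq T f v k =
          ((1:ℂ)/2) ^ k * (ext T f (2 ^ k * u + 2 ^ k * v) - ext T f (2 ^ k * u)
            - ext T f (2 ^ k * v)) := by
        simp only [sq]
        rw [show (2:ℝ) ^ k * (u + v) = 2 ^ k * u + 2 ^ k * v by ring]
        ring
      rw [key]
      rw [show ‖((1:ℂ)/2) ^ k * (ext T f (2 ^ k * u + 2 ^ k * v) - ext T f (2 ^ k * u)
            - ext T f (2 ^ k * v))‖ = ‖(((1:ℂ)/2) ^ k)‖ * ‖(ext T f (2 ^ k * u + 2 ^ k * v) - ext T f (2 ^ k * u) - ext T f (2 ^ k * v))‖ by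
          rw [norm_mul]]
      have habs : ‖(((1:ℂ)/2) ^ k)‖ = (1/2 : ℝ) ^ k := by
        rw [norm_pow]; norm_num
      rw [habs]
      calc ((1:ℝ)/2) ^ k * ‖_‖ ≤ (1/2) ^ k * (2 * δ) :=
            mul_le_mul_of_nonneg_left (ext_defect hT hδ hf _ _) (by positivity)
      _ = (2 * δ) * (1/2) ^ k := by ring
    · have : Filter.Tendsto (fun k : ℕ => ((1:ℝ)/2) ^ k) Filter.atTop (nhds 0) :=
        tendsto_pow_atTop_nhds_zero_of_lt_one (by norm_num) (by norm_num)
      simpa using this.const_mul (2 * δ)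
  have := tendsto_nhds_unique h1 h2
  have h3 : M T f (u + v) - M T f u - M T f v = 0 := this
  linear_combination h3
lemma tendsto_coef (hT : 0 < T) (x : ℝ) :
    Filter.Tendsto (fun k : ℕ => ((1:ℂ)/2) ^ k * ((nn T (2 ^ k * x) : ℤ) : ℂ))
      Filter.atTop (nhds (((x / T : ℝ)) : ℂ)) := by
  have hre : Filter.Tendsto (fun k : ℕ => ((1:ℝ)/2) ^ k * ((nn T (2 ^ k * x) : ℤ) : ℝ))
      Filter.atTop (nhds (x / T)) := by
    have hb : ∀ k : ℕ, ‖((1:ℝ)/2) ^ k * ((nn T (2 ^ k * x) : ℤ) : ℝ) - x / T‖ ≤ (1/2) ^ k := by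
      intro k
      have h1 : (2:ℝ) ^ k * x / T ≤ ((nn T (2 ^ k * x) : ℤ) : ℝ) := Int.le_ceil _
      have h2 : ((nn T (2 ^ k * x) : ℤ) : ℝ) < 2 ^ k * x / T + 1 := Int.ceil_lt_add_one _
      have hpow : ((1:ℝ)/2) ^ k * (2:ℝ) ^ k = 1 := by
        rw [← mul_pow]; norm_num
      have he : ((1:ℝ)/2) ^ k * ((nn T (2 ^ k * x) : ℤ) : ℝ) - x / T
          = ((1:ℝ)/2) ^ k * (((nn T (2 ^ k * x) : ℤ) : ℝ) - 2 ^ k * x / T) := by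
        have hxT : ((1:ℝ)/2) ^ k * ((2:ℝ) ^ k * x / T) = x / T := by
          rw [show ((1:ℝ)/2) ^ k * ((2:ℝ) ^ k * x / T) = (((1:ℝ)/2) ^ k * (2:ℝ) ^ k) * (x / T) by ring,
            hpow, one_mul]
        linear_combination hxT
      rw [he, Real.norm_eq_abs, abs_mul, abs_of_nonneg (by positivity : (0:ℝ) ≤ ((1:ℝ)/2) ^ k),
        abs_of_nonneg (by linarith : (0:ℝ) ≤ ((nn T (2 ^ k * x) : ℤ) : ℝ) - 2 ^ k * x / T)]
      nlinarith [pow_nonneg (by norm_num : (0:ℝ) ≤ 1/2) k]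
    have h0 : Filter.Tendsto (fun k : ℕ => ((1:ℝ)/2) ^ k * ((nn T (2 ^ k * x) : ℤ) : ℝ) - x / T)
        Filter.atTop (nhds 0) :=
      squeeze_zero_norm hb (tendsto_pow_atTop_nhds_zero_of_lt_one (by norm_num) (by norm_num))
    have := h0.add_const (x / T)
    simpa using this
  refine Filter.Tendsto.congr ?_ ((Complex.continuous_ofReal.tendsto _).comp hre)
  intro k
  simp only [Function.comp_apply]
  push_cast
  try ring

lemma M_sub_transfer (hT : 0 < T) (hδ : 0 ≤ δ) {f₁ f₂ f₃ : ℝ → ℂ} {θ' : ℝ}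
    (hf₁ : Add1 T δ f₁) (hf₂ : Add1 T δ f₂) (hf₃ : Add1 T δ f₃)
    (hb : ∀ z ∈ Set.Ico (-T) T, ‖(f₁ z - f₂ z - f₃ z)‖ ≤ θ') (x : ℝ) :
    M T f₁ x - M T f₂ x - M T f₃ x
      = -(((x / T : ℝ)) : ℂ) * (f₁ (-T) - f₂ (-T) - f₃ (-T)) := by
  have h1 : Filter.Tendsto (fun k => sq T f₁ x k - sq T f₂ x k - sq T f₃ x k)
      Filter.atTop (nhds (M T f₁ x - M T f₂ x - M T f₃ x)) :=
    ((tendsto_M hT hδ hf₁ x).sub (tendsto_M hT hδ hf₂ x)).sub (tendsto_M hT hδ hf₃ x)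
  have h2 : Filter.Tendsto (fun k => sq T f₁ x k - sq T f₂ x k - sq T f₃ x k)
      Filter.atTop (nhds (0 - (((x / T : ℝ)) : ℂ) * (f₁ (-T) - f₂ (-T) - f₃ (-T)))) := by
    have heq : ∀ k : ℕ, sq T f₁ x k - sq T f₂ x k - sq T f₃ x k
        = ((1:ℂ)/2) ^ k * (f₁ (rr T (2 ^ k * x)) - f₂ (rr T (2 ^ k * x)) - f₃ (rr T (2 ^ k * x)))
          - (((1:ℂ)/2) ^ k * ((nn T (2 ^ k * x) : ℤ) : ℂ)) * (f₁ (-T) - f₂ (-T) - f₃ (-T)) := by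
      intro k
      simp only [sq, ext]
      ring
    refine Filter.Tendsto.congr (fun k => (heq k).symm) ?_
    apply Filter.Tendsto.sub
    · refine squeeze_zero_norm (a := fun k : ℕ => θ' * (1/2) ^ k) (fun k => ?_) ?_
      · have hmem : rr T (2 ^ k * x) ∈ Set.Ico (-T) T :=
          Ioc_subset_Ico hT (rr_mem hT _)
        have hbb := hb _ hmem
        rw [show ‖((1:ℂ)/2) ^ k * (f₁ (rr T (2 ^ k * x)) - f₂ (rr T (2 ^ k * x))
              - f₃ (rr T (2 ^ k * x)))‖ = ‖(((1:ℂ)/2) ^ k)‖ *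
              ‖(f₁ (rr T (2 ^ k * x)) - f₂ (rr T (2 ^ k * x))
              - f₃ (rr T (2 ^ k * x)))‖ by rw [norm_mul]]
        have habs : ‖(((1:ℂ)/2) ^ k)‖ = (1/2 : ℝ) ^ k := by
          rw [norm_pow]; norm_num
        rw [habs]
        calc ((1:ℝ)/2) ^ k * ‖_‖ ≤ (1/2) ^ k * θ' :=
              mul_le_mul_of_nonneg_left hbb (by positivity)
        _ = θ' * (1/2) ^ k := by ring
      · have : Filter.Tendsto (fun k : ℕ => ((1:ℝ)/2) ^ k) Filter.atTop (nhds 0) :=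
          tendsto_pow_atTop_nhds_zero_of_lt_one (by norm_num) (by norm_num)
        simpa using this.const_mul θ'
    · exact (tendsto_coef hT x).mul_const _
  have huniq := tendsto_nhds_unique h1 h2
  rw [huniq]
  ring

end BST

open BST


/-- Stability of biadditive functional equations on `[−T,T) × [−T,T)`:
a θ-biadditive `g` is within `6θ` of a biadditive `G`; moreover if `g` is
symmetric, `G` can be chosen symmetric. -/
theorem biadditive_stability (T θ : ℝ) (hT : 0 < T) (hθ : 0 ≤ θ)
    (g : ℝ → ℝ → ℂ)
    (h1 : ∀ x₁ x₂ y : ℝ, x₁ ∈ Set.Ico (-T) T → x₂ ∈ Set.Ico (-T) T →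
      y ∈ Set.Ico (-T) T → x₁ + x₂ ∈ Set.Ico (-T) T →
      ‖(g (x₁ + x₂) y - g x₁ y - g x₂ y)‖ ≤ θ)
    (h2 : ∀ x y₁ y₂ : ℝ, x ∈ Set.Ico (-T) T → y₁ ∈ Set.Ico (-T) T →
      y₂ ∈ Set.Ico (-T) T → y₁ + y₂ ∈ Set.Ico (-T) T →
      ‖(g x (y₁ + y₂) - g x y₁ - g x y₂)‖ ≤ θ) :
    ∃ G : ℝ → ℝ → ℂ,
      (∀ x₁ x₂ y : ℝ, x₁ ∈ Set.Ico (-T) T → x₂ ∈ Set.Ico (-T) T →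
        y ∈ Set.Ico (-T) T → x₁ + x₂ ∈ Set.Ico (-T) T →
        G (x₁ + x₂) y = G x₁ y + G x₂ y) ∧
      (∀ x y₁ y₂ : ℝ, x ∈ Set.Ico (-T) T → y₁ ∈ Set.Ico (-T) T →
        y₂ ∈ Set.Ico (-T) T → y₁ + y₂ ∈ Set.Ico (-T) T →
        G x (y₁ + y₂) = G x y₁ + G x y₂) ∧
      (∀ x y : ℝ, x ∈ Set.Ico (-T) T → y ∈ Set.Ico (-T) T →
        ‖(g x y - G x y)‖ ≤ 6 * θ) ∧
      ((∀ x y : ℝ, x ∈ Set.Ico (-T) T → y ∈ Set.Ico (-T) T → g x y = g y x) →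
        ∀ x y : ℝ, x ∈ Set.Ico (-T) T → y ∈ Set.Ico (-T) T → G x y = G y x) := by
  classical
  have hIneg : -T ∈ Set.Ico (-T) T := negT_mem hT
  -- additivity of the slices
  have hAddx : ∀ y : ℝ, y ∈ Set.Ico (-T) T → Add1 T θ (fun x' => g x' y) :=
    fun y hy x₁ x₂ hx₁ hx₂ hx₁₂ => h1 x₁ x₂ y hx₁ hx₂ hy hx₁₂
  have hAdd2 : Add1 T θ (fun y' => g (-T) y') :=
    fun y₁ y₂ hy₁ hy₂ hy₁₂ => h2 (-T) y₁ y₂ hIneg hy₁ hy₂ hy₁₂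
  -- the corrected function G0
  set G0 : ℝ → ℝ → ℂ := fun x y => M T (fun x' => g x' y) x +
    (((x / T : ℝ)) : ℂ) * (g (-T) y - M T (fun y' => g (-T) y') y) with hG0
  -- x-additivity (for all real x₁ x₂, y in the interval)
  have hGx : ∀ (x₁ x₂ y : ℝ), y ∈ Set.Ico (-T) T →
      G0 (x₁ + x₂) y = G0 x₁ y + G0 x₂ y := by
    intro x₁ x₂ y hy
    have hFadd := M_additive hT hθ (hAddx y hy) x₁ x₂
    simp only [hG0]
    rw [hFadd]
    have hc : (((x₁ + x₂) / T : ℝ) : ℂ) = ((x₁ / T : ℝ) : ℂ) + ((x₂ / T : ℝ) : ℂ) := by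
      push_cast
      ring
    rw [hc]
    ring
  -- y-additivity (for all real x, y's in the interval)
  have hGy : ∀ (x y₁ y₂ : ℝ), y₁ ∈ Set.Ico (-T) T → y₂ ∈ Set.Ico (-T) T →
      y₁ + y₂ ∈ Set.Ico (-T) T → G0 x (y₁ + y₂) = G0 x y₁ + G0 x y₂ := by
    intro x y₁ y₂ hy₁ hy₂ hy₁₂
    have ht := M_sub_transfer hT hθ (hAddx _ hy₁₂) (hAddx _ hy₁) (hAddx _ hy₂)
      (fun z hz => h2 z y₁ y₂ hz hy₁ hy₂ hy₁₂) x
    have hA := M_additive hT hθ hAdd2 y₁ y₂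
    simp only [hG0]
    linear_combination ht - (((x / T : ℝ)) : ℂ) * hA
  -- approximation bound
  have hGb : ∀ (x y : ℝ), x ∈ Set.Ico (-T) T → y ∈ Set.Ico (-T) T →
      ‖(g x y - G0 x y)‖ ≤ 6 * θ := by
    intro x y hx hy
    have habs1 : ‖(g x y - M T (fun x' => g x' y) x)‖ ≤ 3 * θ :=
      M_approx hT hθ (hAddx y hy) hx
    have habs2 : ‖(g (-T) y - M T (fun y' => g (-T) y') y)‖ ≤ 3 * θ :=
      M_approx hT hθ hAdd2 hy
    have hxT : ‖(((x / T : ℝ)) : ℂ)‖ ≤ 1 := by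
      rw [Complex.norm_real, Real.norm_eq_abs, abs_div, abs_of_pos hT, div_le_one hT]
      exact abs_le.mpr ⟨hx.1, hx.2.le⟩
    have hkey : g x y - G0 x y = (g x y - M T (fun x' => g x' y) x) -
        (((x / T : ℝ)) : ℂ) * (g (-T) y - M T (fun y' => g (-T) y') y) := by
      simp only [hG0]
      ring
    rw [hkey]
    calc ‖_‖ ≤ ‖(g x y - M T (fun x' => g x' y) x)‖ +
          ‖((((x / T : ℝ)) : ℂ) * (g (-T) y - M T (fun y' => g (-T) y') y))‖ :=
        abs_sub_le' _ _
    _ ≤ 3 * θ + 1 * (3 * θ) := by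
        refine add_le_add habs1 ?_
        rw [norm_mul]
        exact mul_le_mul hxT habs2 (by positivity) (by norm_num)
    _ ≤ 6 * θ := by linarith
  by_cases hsym : ∀ x y : ℝ, x ∈ Set.Ico (-T) T → y ∈ Set.Ico (-T) T → g x y = g y x
  · -- symmetric case: symmetrize G0
    refine ⟨fun x y => (G0 x y + G0 y x) / 2, ?_, ?_, ?_, ?_⟩
    · intro x₁ x₂ y hx₁ hx₂ hy hx₁₂
      have e1 := hGx x₁ x₂ y hy
      have e2 := hGy y x₁ x₂ hx₁ hx₂ hx₁₂
      show (G0 (x₁ + x₂) y + G0 y (x₁ + x₂)) / 2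
        = (G0 x₁ y + G0 y x₁) / 2 + (G0 x₂ y + G0 y x₂) / 2
      rw [e1, e2]
      ring
    · intro x y₁ y₂ hx hy₁ hy₂ hy₁₂
      have e1 := hGy x y₁ y₂ hy₁ hy₂ hy₁₂
      have e2 := hGx y₁ y₂ x hx
      show (G0 x (y₁ + y₂) + G0 (y₁ + y₂) x) / 2
        = (G0 x y₁ + G0 y₁ x) / 2 + (G0 x y₂ + G0 y₂ x) / 2
      rw [e1, e2]
      ring
    · intro x y hx hy
      show ‖(g x y - (G0 x y + G0 y x) / 2)‖ ≤ 6 * θ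
      have e : g x y - (G0 x y + G0 y x) / 2 =
          ((g x y - G0 x y) + (g y x - G0 y x)) / 2 := by
        rw [← hsym x y hx hy]
        ring
      rw [e]
      have := abs_sub_le' (g x y - G0 x y) (-(g y x - G0 y x))
      calc ‖(((g x y - G0 x y) + (g y x - G0 y x)) / 2)‖
          = ‖((g x y - G0 x y) + (g y x - G0 y x))‖ / 2 := by
            rw [norm_div]
            norm_num
      _ ≤ (‖(g x y - G0 x y)‖ + ‖(g y x - G0 y x)‖) / 2 := by
            have := norm_add_le (g x y - G0 x y) (g y x - G0 y x)
            linarith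
      _ ≤ 6 * θ := by
            have b1 := hGb x y hx hy
            have b2 := hGb y x hy hx
            linarith
    · intro _ x y hx hy
      show (G0 x y + G0 y x) / 2 = (G0 y x + G0 x y) / 2
      ring
  · -- general case
    refine ⟨G0, ?_, ?_, ?_, ?_⟩
    · intro x₁ x₂ y _ _ hy _
      exact hGx x₁ x₂ y hy
    · intro x y₁ y₂ _ hy₁ hy₂ hy₁₂
      exact hGy x y₁ y₂ hy₁ hy₂ hy₁₂
    · exact hGb
    · intro h
      exact absurd h hsym
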